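/- There exists a constant λ₀ > 0 such that for all real λ ≥ λ₀ and all natural numbers l with 1 ≤ l ≤ λ − √λ, one has (l/λ)^l ≤ 1/λ. -/

import Mathlib

/-- There is a constant `λ₀ > 0` such that for all `λ ≥ λ₀` and all naturals
`1 ≤ l ≤ λ − √λ`, `(l/λ)^l ≤ 1/λ`. -/
theorem ratio_pow_le :
    ∃ lam₀ > (0 : ℝ), ∀ lam : ℝ, lam₀ ≤ lam → ∀ l : ℕ, 1 ≤ l →
      (l : ℝ) ≤ lam - Real.sqrt lam →
      ((l : ℝ) / lam) ^ l ≤ 1 / lam := by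
  refine ⟨4096, by norm_num, ?_⟩
  intro lam hlam l hl1 hl2
  have hlam0 : (0 : ℝ) < lam := by linarith
  have hl0 : (0 : ℝ) < (l : ℝ) := by exact_mod_cast hl1
  by_cases hcase : 2 * (l : ℝ) ≤ lam
  · -- small l case
    have hpred : l = (l - 1) + 1 := (Nat.succ_pred_eq_of_pos hl1).symm
    have hle2 : (l : ℝ) ≤ 2 ^ (l - 1) := by
      have : l - 1 < 2 ^ (l - 1) := Nat.lt_two_pow_self
      have : l ≤ 2 ^ (l - 1) := by omega
      exact_mod_cast this
    have h1 : (l : ℝ) ^ l ≤ lam ^ (l - 1) := by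
      calc (l : ℝ) ^ l = (l : ℝ) ^ (l - 1) * (l : ℝ) := by
            have h := pow_succ (l : ℝ) (l - 1)
            rw [← hpred] at h
            exact h
        _ ≤ (l : ℝ) ^ (l - 1) * 2 ^ (l - 1) := by
            exact mul_le_mul_of_nonneg_left hle2 (by positivity)
        _ = (2 * (l : ℝ)) ^ (l - 1) := by rw [mul_pow]; ring
        _ ≤ lam ^ (l - 1) := pow_le_pow_left₀ (by positivity) hcase _
    rw [div_pow, div_le_div_iff₀ (by positivity) hlam0, one_mul]
    calc (l : ℝ) ^ l * lam ≤ lam ^ (l - 1) * lam := by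
          exact mul_le_mul_of_nonneg_right h1 hlam0.le
      _ = lam ^ l := by rw [← pow_succ, ← hpred]
  · -- large l case
    push_neg at hcase
    set s := Real.sqrt lam with hs
    have hs0 : 0 < s := Real.sqrt_pos.mpr hlam0
    have hss : s * s = lam := Real.mul_self_sqrt hlam0.le
    have hx0 : (0 : ℝ) ≤ (l : ℝ) / lam := by positivity
    have hx : (l : ℝ) / lam ≤ 1 - 1 / s := by
      rw [div_le_iff₀ hlam0]
      have : (1 - 1 / s) * lam = lam - s := by
        field_simp
        nlinarith
      rw [this]; linarith
    have hexp1 : 1 - 1 / s ≤ Real.exp (-(1 / s)) := by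
      have := Real.add_one_le_exp (-(1 / s))
      linarith
    have hxe : (l : ℝ) / lam ≤ Real.exp (-(1 / s)) := hx.trans hexp1
    have hpow : ((l : ℝ) / lam) ^ l ≤ Real.exp (-(1 / s)) ^ l :=
      pow_le_pow_left₀ hx0 hxe l
    have hexp2 : Real.exp (-(1 / s)) ^ l = Real.exp (-(l / s)) := by
      rw [← Real.exp_nat_mul]
      ring_nf
    -- need exp(-(l/s)) ≤ 1/lam, i.e. log lam ≤ l / s
    have hs64 : (64 : ℝ) ≤ s := by
      have h : Real.sqrt 4096 ≤ s := Real.sqrt_le_sqrt hlam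
      have : Real.sqrt 4096 = 64 := by
        rw [show (4096 : ℝ) = 64 ^ 2 by norm_num, Real.sqrt_sq (by norm_num)]
      linarith
    set t := Real.sqrt s with ht
    have ht0 : 0 < t := Real.sqrt_pos.mpr hs0
    have htt : t * t = s := Real.mul_self_sqrt hs0.le
    have ht8 : (8 : ℝ) ≤ t := by
      have h : Real.sqrt 64 ≤ t := Real.sqrt_le_sqrt hs64
      have : Real.sqrt 64 = 8 := by
        rw [show (64 : ℝ) = 8 ^ 2 by norm_num, Real.sqrt_sq (by norm_num)]
      linarith
    have hlogt : Real.log t ≤ t - 1 := Real.log_le_sub_one_of_pos ht0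
    have hlog : Real.log lam = 4 * Real.log t := by
      rw [← hss, ← htt, Real.log_mul (by nlinarith) (by nlinarith),
        Real.log_mul ht0.ne' ht0.ne']
      ring
    have hloglam : Real.log lam ≤ s / 2 := by
      rw [hlog]
      nlinarith
    have hls : Real.log lam ≤ (l : ℝ) / s := by
      have : s / 2 ≤ (l : ℝ) / s := by
        rw [div_le_div_iff₀ (by norm_num) hs0]
        nlinarith
      linarith
    have hfin : Real.exp (-(l / s)) ≤ 1 / lam := by
      rw [← Real.log_le_log_iff (Real.exp_pos _) (by positivity),
        Real.log_exp, Real.log_div one_ne_zero hlam0.ne', Real.log_one]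
      have : -(l / s) ≤ -Real.log lam := by linarith
      linarith
    calc ((l : ℝ) / lam) ^ l ≤ Real.exp (-(1 / s)) ^ l := hpow
      _ = Real.exp (-(l / s)) := hexp2
      _ ≤ 1 / lam := hfin
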